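/- Let M be a matroid with modular cut 𝓜. The lattice of flats of the truncation Tr_𝓜(M) consists exactly of those flats F of M that are not in the collar C_𝓜, where C_𝓜 is the set of flats F ∉ 𝓜 such that cl_M(F ∪ {a}) ∈ 𝓜 for some element a of the ground set. -/

import Mathlib

variable {α : Type*}

/-- The rank of a set in a matroid: the supremum of the cardinalities of
independent subsets of the set. -/
noncomputable def Matroid.mrk (M : Matroid α) (X : Set α) : ℕ :=
  sSup (Set.ncard '' {I | M.Indep I ∧ I ⊆ X})

/-- A *modular cut* of a matroid `M`: an upward-closed (within the lattice of
flats) family of flats of `M` which is closed under meets of modular pairs. -/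
def Matroid.IsModularCutFam (M : Matroid α) (𝓜 : Set (Set α)) : Prop :=
  (∀ F ∈ 𝓜, M.IsFlat F) ∧
  (∀ F ∈ 𝓜, ∀ G : Set α, M.IsFlat G → F ⊆ G → G ∈ 𝓜) ∧
  (∀ F ∈ 𝓜, ∀ G ∈ 𝓜,
    M.mrk (F ∪ G) + M.mrk (F ∩ G) = M.mrk F + M.mrk G → F ∩ G ∈ 𝓜)

/-- `N` is the single-element extension `M ∪_𝓜 e` of `M` along the modular cut
`𝓜`: it is the matroid on `M.E ∪ {e}` whose rank function satisfies
`rk_N S = rk_M S` for `S ⊆ M.E`, and `rk_N (S ∪ {e}) = rk_M S` if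
`cl_M S ∈ 𝓜`, and `rk_M S + 1` otherwise. -/
def Matroid.IsSingleElemExt (M : Matroid α) (𝓜 : Set (Set α)) (e : α)
    (N : Matroid α) : Prop :=
  N.E = insert e M.E ∧
  (∀ S : Set α, S ⊆ M.E → N.mrk S = M.mrk S) ∧
  (∀ S : Set α, S ⊆ M.E → M.closure S ∈ 𝓜 → N.mrk (insert e S) = M.mrk S) ∧
  (∀ S : Set α, S ⊆ M.E → M.closure S ∉ 𝓜 →
    N.mrk (insert e S) = M.mrk S + 1)

open Set

namespace Matroid

lemma mrk_eq_ncard_basis {M : Matroid α} [M.Finite] {I X : Set α} (hI : M.IsBasis I X) :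
    M.mrk X = I.ncard := by
  have hbdd : BddAbove (Set.ncard '' {J | M.Indep J ∧ J ⊆ X}) := by
    refine ⟨M.E.ncard, ?_⟩
    rintro n ⟨J, ⟨hJ, -⟩, rfl⟩
    exact ncard_le_ncard hJ.subset_ground M.ground_finite
  refine le_antisymm ?_ (le_csSup hbdd ⟨I, ⟨hI.indep, hI.subset⟩, rfl⟩)
  refine csSup_le ⟨0, ⟨∅, ⟨M.empty_indep, empty_subset X⟩, by simp⟩⟩ ?_
  rintro n ⟨J, ⟨hJ, hJX⟩, rfl⟩
  obtain ⟨J', hJ', hJJ'⟩ := hJ.subset_isBasis_of_subset hJX hI.subset_ground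
  have hcard : J'.ncard = I.ncard := by
    rw [ncard_def, hJ'.encard_eq_encard hI, ← ncard_def]
  rw [← hcard]
  exact ncard_le_ncard hJJ' (M.ground_finite.subset hJ'.indep.subset_ground)

lemma mrk_insert_of_mem_closure {M : Matroid α} [M.Finite] {X : Set α} {a : α}
    (hX : X ⊆ M.E) (ha : a ∈ M.closure X) : M.mrk (insert a X) = M.mrk X := by
  obtain ⟨I, hI⟩ := M.exists_isBasis X hX
  have hI' : M.IsBasis I (insert a X) :=
    hI.isBasis_closure_right.isBasis_subset (hI.subset.trans (subset_insert _ _))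
      (insert_subset ha (M.subset_closure X hX))
  rw [mrk_eq_ncard_basis hI', mrk_eq_ncard_basis hI]

lemma mrk_insert_of_not_mem_closure {M : Matroid α} [M.Finite] {X : Set α} {a : α}
    (hX : X ⊆ M.E) (haE : a ∈ M.E) (ha : a ∉ M.closure X) :
    M.mrk (insert a X) = M.mrk X + 1 := by
  obtain ⟨I, hI⟩ := M.exists_isBasis X hX
  have haI : a ∉ I := fun h => ha (M.mem_closure_of_mem (hI.subset h) hX)
  have hind : M.Indep (insert a I) := by
    rw [hI.indep.insert_indep_iff_of_notMem haI, hI.closure_eq_closure]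
    exact ⟨haE, ha⟩
  have hI' := hI.insert_isBasis_insert hind
  rw [mrk_eq_ncard_basis hI', mrk_eq_ncard_basis hI,
    ncard_insert_of_notMem haI (M.ground_finite.subset hI.indep.subset_ground)]

lemma mem_closure_iff_mrk {M : Matroid α} [M.Finite] {X : Set α} {a : α}
    (hX : X ⊆ M.E) (haE : a ∈ M.E) :
    a ∈ M.closure X ↔ M.mrk (insert a X) = M.mrk X := by
  refine ⟨mrk_insert_of_mem_closure hX, fun h => by_contra fun ha => ?_⟩
  rw [mrk_insert_of_not_mem_closure hX haE ha] at h
  omega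

lemma flat_of_closure_subset {M : Matroid α} {F : Set α} (hFE : F ⊆ M.E)
    (h : M.closure F ⊆ F) : M.IsFlat F := by
  refine ⟨fun I X hIF hIX => ?_, hFE⟩
  have hX : X ⊆ M.closure I := hIX.subset_closure
  rw [hIF.closure_eq_closure] at hX
  exact hX.trans h

lemma closure_flat' (M : Matroid α) (X : Set α) : M.IsFlat (M.closure X) :=
  flat_of_closure_subset (M.closure_subset_ground X) (by rw [M.closure_closure])

end Matroid

/-- the flats of the truncation `Tr_𝓜(M)` are exactly the flats
of `M` that do not lie in the collar
`C_𝓜 = {F flat of M : F ∉ 𝓜 and cl_M(F ∪ {a}) ∈ 𝓜 for some a ∈ E(M)}`. -/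
theorem truncation_flats (M : Matroid α) [M.Finite] (𝓜 : Set (Set α))
    (h𝓜 : M.IsModularCutFam 𝓜) (hproper : M.closure ∅ ∉ 𝓜)
    (T : Matroid α) (hTE : T.E = M.E)
    (hT1 : ∀ S : Set α, S ⊆ M.E → M.closure S ∈ 𝓜 → T.mrk S = M.mrk S - 1)
    (hT2 : ∀ S : Set α, S ⊆ M.E → M.closure S ∉ 𝓜 → T.mrk S = M.mrk S) :
    {F : Set α | T.IsFlat F} =
      {F : Set α | M.IsFlat F} \
        {F : Set α | M.IsFlat F ∧ F ∉ 𝓜 ∧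
          ∃ a ∈ M.E, M.closure (insert a F) ∈ 𝓜} := by
  classical
  have hTfin : T.Finite := ⟨hTE ▸ M.ground_finite⟩
  ext F
  simp only [Set.mem_setOf_eq, Set.mem_diff]
  constructor
  · intro hF
    have hFE : F ⊆ M.E := hTE ▸ hF.subset_ground
    -- F is a flat of M
    have hMflat : M.IsFlat F := by
      refine Matroid.flat_of_closure_subset hFE fun a ha => ?_
      have haE : a ∈ M.E := M.closure_subset_ground F ha
      have hmrk : M.mrk (insert a F) = M.mrk F := Matroid.mrk_insert_of_mem_closure hFE ha
      have hcl : M.closure (insert a F) = M.closure F :=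
        Matroid.closure_insert_eq_of_mem_closure ha
      have haF' : insert a F ⊆ M.E := Set.insert_subset haE hFE
      have hTmrk : T.mrk (insert a F) = T.mrk F := by
        by_cases hm : M.closure F ∈ 𝓜
        · rw [hT1 _ haF' (hcl ▸ hm), hT1 _ hFE hm, hmrk]
        · rw [hT2 _ haF' (hcl ▸ hm), hT2 _ hFE hm, hmrk]
      have : a ∈ T.closure F :=
        (Matroid.mem_closure_iff_mrk (hTE ▸ hFE) (hTE ▸ haE)).2 hTmrk
      rwa [hF.closure] at this
    refine ⟨hMflat, fun hcol => ?_⟩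
    obtain ⟨-, hF𝓜, a, haE, hcl𝓜⟩ := hcol
    have hclF : M.closure F = F := hMflat.closure
    have haF : a ∉ F := by
      intro haF
      rw [Set.insert_eq_of_mem haF, hclF] at hcl𝓜
      exact hF𝓜 hcl𝓜
    have hanotcl : a ∉ M.closure F := by rw [hclF]; exact haF
    have hmrk : M.mrk (insert a F) = M.mrk F + 1 :=
      Matroid.mrk_insert_of_not_mem_closure hFE haE hanotcl
    have haF' : insert a F ⊆ M.E := Set.insert_subset haE hFE
    have hTmrk : T.mrk (insert a F) = T.mrk F := by
      rw [hT1 _ haF' hcl𝓜, hT2 _ hFE (by rw [hclF]; exact hF𝓜), hmrk]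
      omega
    have : a ∈ T.closure F :=
      (Matroid.mem_closure_iff_mrk (hTE ▸ hFE) (hTE ▸ haE)).2 hTmrk
    rw [hF.closure] at this
    exact haF this
  · rintro ⟨hMflat, hnc⟩
    have hFE : F ⊆ M.E := hMflat.subset_ground
    have hclF : M.closure F = F := hMflat.closure
    refine Matroid.flat_of_closure_subset (hTE ▸ hFE) fun a ha => ?_
    have haE : a ∈ M.E := hTE ▸ T.closure_subset_ground F ha
    by_contra haF
    have hanotcl : a ∉ M.closure F := by rw [hclF]; exact haF
    have hmrk : M.mrk (insert a F) = M.mrk F + 1 :=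
      Matroid.mrk_insert_of_not_mem_closure hFE haE hanotcl
    have haF' : insert a F ⊆ M.E := Set.insert_subset haE hFE
    have hTmrk : T.mrk (insert a F) = T.mrk F :=
      (Matroid.mem_closure_iff_mrk (hTE ▸ hFE) (hTE ▸ haE)).1 ha
    by_cases hm : F ∈ 𝓜
    · -- then closure (insert a F) ∈ 𝓜 by upward closedness, and mrk F ≥ 1
      have hclin : M.closure (insert a F) ∈ 𝓜 := by
        refine h𝓜.2.1 F hm _ (Matroid.closure_flat' M _) ?_
        exact (M.subset_closure F hFE).trans (M.closure_subset_closure (Set.subset_insert a F))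
      have hrk1 : 1 ≤ M.mrk F := by
        by_contra hr
        push_neg at hr
        obtain ⟨I, hI⟩ := M.exists_isBasis F hFE
        have hI0 : I.ncard = 0 := by
          have := Matroid.mrk_eq_ncard_basis hI; omega
        have hIfin : I.Finite := M.ground_finite.subset hI.indep.subset_ground
        have hIempty : I = ∅ := (Set.ncard_eq_zero hIfin).1 hI0
        have : M.closure ∅ = F := by
          rw [← hIempty, hI.closure_eq_closure, hclF]
        exact hproper (this ▸ hm)
      rw [hT1 _ haF' hclin, hT1 _ hFE (by rw [hclF]; exact hm), hmrk] at hTmrk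
      omega
    · have hclnotin : M.closure (insert a F) ∉ 𝓜 := by
        intro hcl𝓜
        exact hnc ⟨hMflat, hm, a, haE, hcl𝓜⟩
      rw [hT2 _ haF' hclnotin, hT2 _ hFE (by rw [hclF]; exact hm), hmrk] at hTmrk
      omega
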